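/- Let (𝔚, μ) be a measure space and suppose a semimetric d on a set X is given by d(x,y) = μ(S_x △ S_y), where S_x ⊆ 𝔚 is a measurable set of finite measure for each x ∈ X. Then d is a hypermetric: for every finite subset {x₁,…,xₘ} of X and integers t₁,…,tₘ with ∑tᵢ = 1, one has ∑ᵢⱼ tᵢtⱼ d(xᵢ,xⱼ) ≤ 0. -/

import Mathlib

open MeasureTheory

private lemma int_self_le_sq (n : ℤ) : n - n^2 ≤ 0 := by
  rcases le_or_gt n 0 with h | h
  · nlinarith [sq_nonneg n]
  · nlinarith

/-- If a semimetric `d` on `X` is given by `d(x,y) = μ(S_x △ S_y)` for measurable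
sets `S_x` of finite measure, then `d` is a hypermetric: for every finite family
`x₁,…,xₘ` in `X` and integers `tᵢ` with `∑ tᵢ = 1` one has
`∑ᵢⱼ tᵢ tⱼ d(xᵢ,xⱼ) ≤ 0`. -/
theorem measure_definite_kernel_hypermetric
    {W : Type*} [MeasurableSpace W] (μ : Measure W) {X : Type*}
    (S : X → Set W) (hmeas : ∀ x, MeasurableSet (S x))
    (hfin : ∀ x, μ (S x) < ⊤)
    (d : X → X → ℝ) (hd : ∀ x y, d x y = (μ (symmDiff (S x) (S y))).toReal)
    (m : ℕ) (x : Fin m → X) (t : Fin m → ℤ) (ht : (∑ i, t i) = 1) :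
    ∑ i, ∑ j, (t i : ℝ) * (t j : ℝ) * d (x i) (x j) ≤ 0 := by
  classical
  set A : Fin m → Set W := fun i => S (x i) with hA
  set h : Fin m → W → ℝ := fun i w => if w ∈ A i then 1 else 0 with hh
  have hmeasA : ∀ i, MeasurableSet (A i) := fun i => hmeas _
  have hfinA : ∀ i, μ (A i) < ⊤ := fun i => hfin _
  have hsd_fin : ∀ i j, μ (symmDiff (A i) (A j)) < ⊤ := fun i j =>
    lt_of_le_of_lt (le_trans (measure_mono Set.symmDiff_subset_union) (measure_union_le _ _))
      (ENNReal.add_lt_top.2 ⟨hfinA i, hfinA j⟩)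
  have hpt : ∀ i j w, (h i w - h j w)^2
      = (symmDiff (A i) (A j)).indicator (fun _ => (1:ℝ)) w := by
    intro i j w
    by_cases hi : w ∈ A i <;> by_cases hj : w ∈ A j <;>
      simp [hh, Set.indicator_apply, Set.mem_symmDiff, hi, hj]
  have hint : ∀ i j, Integrable (fun w => (h i w - h j w)^2) μ := by
    intro i j
    have : Integrable ((symmDiff (A i) (A j)).indicator (fun _ => (1:ℝ))) μ := by
      rw [integrable_indicator_iff ((hmeasA i).symmDiff (hmeasA j))]
      exact integrableOn_const (hsd_fin i j).ne
    exact this.congr (Filter.Eventually.of_forall fun w => (hpt i j w).symm)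
  have hd' : ∀ i j, d (x i) (x j) = ∫ w, (h i w - h j w)^2 ∂μ := by
    intro i j
    rw [hd]
    have heq : ∫ w, (h i w - h j w)^2 ∂μ
        = ∫ w, (symmDiff (A i) (A j)).indicator (fun _ => (1:ℝ)) w ∂μ :=
      integral_congr_ae (Filter.Eventually.of_forall fun w => hpt i j w)
    rw [heq, integral_indicator_const _ ((hmeasA i).symmDiff (hmeasA j))]
    simp [hA]
    rfl
  have hLHS : ∑ i, ∑ j, (t i : ℝ) * (t j : ℝ) * d (x i) (x j)
      = ∫ w, ∑ i, ∑ j, (t i : ℝ) * (t j : ℝ) * (h i w - h j w)^2 ∂μ := by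
    rw [integral_finset_sum]
    · refine Finset.sum_congr rfl fun i _ => ?_
      rw [integral_finset_sum]
      · exact Finset.sum_congr rfl fun j _ => by
          rw [hd' i j, ← integral_const_mul]
      · exact fun j _ => (hint i j).const_mul _
    · exact fun i _ => integrable_finset_sum _ fun j _ => (hint i j).const_mul _
  rw [hLHS]
  refine integral_nonpos fun w => ?_
  show (∑ i, ∑ j, (t i : ℝ) * (t j : ℝ) * (h i w - h j w)^2) ≤ 0
  set e : Fin m → ℤ := fun i => if w ∈ A i then 1 else 0 with he
  have hhe : ∀ i, h i w = (e i : ℝ) := by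
    intro i; simp only [hh, he]; split_ifs <;> simp
  have hee : ∀ i, e i * e i = e i := by
    intro i; simp only [he]; split_ifs <;> ring
  set n : ℤ := ∑ i, t i * e i with hn
  have sqe : ∀ i j, (e i - e j)^2 = e i + e j - 2*(e i * e j) := by
    intro i j
    calc (e i - e j)^2 = e i * e i + e j * e j - 2*(e i * e j) := by ring
      _ = e i + e j - 2*(e i * e j) := by rw [hee i, hee j]
  have keyZ : (∑ i, ∑ j, t i * t j * (e i - e j)^2) = 2*n - 2*n^2 := by
    have step : ∀ i, ∑ j, t i * t j * (e i - e j)^2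
        = (t i * e i) * (∑ j, t j) + t i * (∑ j, t j * e j)
          - 2 * ((t i * e i) * (∑ j, t j * e j)) := by
      intro i
      simp only [Finset.mul_sum, Finset.sum_mul, ← Finset.sum_add_distrib,
        ← Finset.sum_sub_distrib]
      refine Finset.sum_congr rfl fun j _ => ?_
      rw [sqe i j]; ring
    calc (∑ i, ∑ j, t i * t j * (e i - e j)^2)
        = ∑ i, ((t i * e i) * (∑ j, t j) + t i * (∑ j, t j * e j)
            - 2 * ((t i * e i) * (∑ j, t j * e j))) :=
          Finset.sum_congr rfl fun i _ => step i
      _ = ∑ i, (t i * e i + t i * n - 2 * ((t i * e i) * n)) := by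
          refine Finset.sum_congr rfl fun i _ => ?_
          rw [ht, ← hn]; ring
      _ = (∑ i, t i * e i) + (∑ i, t i) * n - 2 * ((∑ i, t i * e i) * n) := by
          simp only [Finset.mul_sum, Finset.sum_mul, ← Finset.sum_add_distrib,
            ← Finset.sum_sub_distrib]
      _ = 2*n - 2*n^2 := by rw [← hn, ht]; ring
  have hcast : ∑ i, ∑ j, (t i : ℝ) * (t j : ℝ) * (h i w - h j w)^2
      = ((2*n - 2*n^2 : ℤ) : ℝ) := by
    rw [← keyZ]
    push_cast
    exact Finset.sum_congr rfl fun i _ => Finset.sum_congr rfl fun j _ => by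
      rw [hhe i, hhe j]
  rw [hcast]
  have := int_self_le_sq n
  have h2 : (2*n - 2*n^2 : ℤ) ≤ 0 := by nlinarith
  exact_mod_cast h2
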